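/- For every real ρ and every integer n ≥ 1, the convolution identity Σ_{s=0}^{n} γ_s · A_{2(n−s)}(ρ) = 0 holds, where γ₀ = −1, γ₁ = ρ²−2ρ+3, γ₂ = (ρ−2)(2ρ²−3ρ+2), γ_s = 4(1−ρ)⁴(2ρ−1)^(s−3) for s ≥ 3, and A_L(ρ) = Σ_{s=0}^{L} (−1)^s (L+1−s) ρ^s. -/

import Mathlib

/-- A_L(ρ) = Σ_{s=0}^{L} (−1)^s (L+1−s) ρ^s. -/
noncomputable def A (L : ℕ) (ρ : ℝ) : ℝ :=
  ∑ s ∈ Finset.range (L + 1), (-1 : ℝ) ^ s * ((L + 1 - s : ℕ) : ℝ) * ρ ^ s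

theorem stmt_13 (ρ : ℝ) (γ : ℕ → ℝ)
    (hγ0 : γ 0 = -1)
    (hγ1 : γ 1 = ρ ^ 2 - 2 * ρ + 3)
    (hγ2 : γ 2 = (ρ - 2) * (2 * ρ ^ 2 - 3 * ρ + 2))
    (hγ : ∀ s, 3 ≤ s → γ s = 4 * (1 - ρ) ^ 4 * (2 * ρ - 1) ^ (s - 3))
    (n : ℕ) (hn : 1 ≤ n) :
    ∑ s ∈ Finset.range (n + 1), γ s * A (2 * (n - s)) ρ = 0 := by
  have A0 : A 0 ρ = 1 := by simp [A]
  have Arec : ∀ L : ℕ, A (L + 2) ρ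
      = ρ ^ 2 * A L ρ + ((L : ℝ) + 3) - ((L : ℝ) + 2) * ρ := by
    intro L
    unfold A
    rw [Finset.sum_range_succ', Finset.sum_range_succ']
    have step : ∀ s ∈ Finset.range (L + 1),
        (-1 : ℝ) ^ (s + 1 + 1) * ((L + 2 + 1 - (s + 1 + 1) : ℕ) : ℝ) * ρ ^ (s + 1 + 1)
          = ρ ^ 2 * ((-1 : ℝ) ^ s * ((L + 1 - s : ℕ) : ℝ) * ρ ^ s) := by
      intro s hs
      have h : L + 2 + 1 - (s + 1 + 1) = L + 1 - s := by omega
      rw [h]; ring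
    rw [Finset.sum_congr rfl step, ← Finset.mul_sum]
    have h1 : L + 2 + 1 - (0 + 1) = L + 2 := by omega
    have h0 : L + 2 + 1 - 0 = L + 3 := by omega
    rw [h1, h0]
    push_cast
    ring
  have hγ' : ∀ m : ℕ, γ (m + 3) = 4 * (1 - ρ) ^ 4 * (2 * ρ - 1) ^ m := by
    intro m
    rw [hγ (m + 3) (by omega)]
    congr 1
  have P : ∀ m : ℕ, ∑ s ∈ Finset.range (m + 3), γ s
      = 2 * (ρ - 1) ^ 3 * (2 * ρ - 1) ^ m := by
    intro m
    induction m with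
    | zero =>
      rw [Finset.sum_range_succ, Finset.sum_range_succ, Finset.sum_range_one,
        hγ0, hγ1, hγ2]
      ring
    | succ k ih =>
      rw [show k + 1 + 3 = (k + 3) + 1 from rfl, Finset.sum_range_succ, ih, hγ' k]
      ring
  have T : ∀ n : ℕ, 1 ≤ n →
      (∑ s ∈ Finset.range (n + 1),
        γ s * (2 * ((n - s : ℕ) : ℝ) + 3 - (2 * ((n - s : ℕ) : ℝ) + 2) * ρ))
        + γ (n + 1) = 0 := by
    intro n hn
    induction n, hn using Nat.le_induction with
    | base =>
      rw [Finset.sum_range_succ, Finset.sum_range_one, hγ0, hγ1, hγ2]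
      norm_num
      ring
    | succ k hk ih =>
      obtain ⟨m, rfl⟩ : ∃ m, k = m + 1 := ⟨k - 1, by omega⟩
      rw [Finset.sum_range_succ]
      have step : ∀ s ∈ Finset.range (m + 2),
          γ s * (2 * ((m + 1 + 1 - s : ℕ) : ℝ) + 3 - (2 * ((m + 1 + 1 - s : ℕ) : ℝ) + 2) * ρ)
            = γ s * (2 * ((m + 1 - s : ℕ) : ℝ) + 3 - (2 * ((m + 1 - s : ℕ) : ℝ) + 2) * ρ)
              + γ s * (2 - 2 * ρ) := by
        intro s hs
        simp only [Finset.mem_range] at hs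
        have h : m + 1 + 1 - s = (m + 1 - s) + 1 := by omega
        rw [h]; push_cast; ring
      rw [Finset.sum_congr rfl step, Finset.sum_add_distrib, ← Finset.sum_mul]
      have hP := P m
      rw [show m + 3 = (m + 2) + 1 from rfl, Finset.sum_range_succ] at hP
      rw [show m + 1 + 1 + 1 = m + 3 from rfl, hγ' m]
      simp only [Nat.sub_self, Nat.cast_zero]
      linear_combination ih + (2 - 2 * ρ) * hP
  have S : ∀ n : ℕ, 1 ≤ n →
      ∑ s ∈ Finset.range (n + 1), γ s * A (2 * (n - s)) ρ = 0 := by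
    intro n hn
    induction n, hn using Nat.le_induction with
    | base =>
      rw [Finset.sum_range_succ, Finset.sum_range_one, hγ0, hγ1]
      norm_num
      rw [show A 2 ρ = A (0 + 2) ρ from rfl, Arec 0, A0]
      push_cast
      ring
    | succ k hk ih =>
      rw [Finset.sum_range_succ]
      have step : ∀ s ∈ Finset.range (k + 1),
          γ s * A (2 * (k + 1 - s)) ρ
            = ρ ^ 2 * (γ s * A (2 * (k - s)) ρ)
              + γ s * (2 * ((k - s : ℕ) : ℝ) + 3 - (2 * ((k - s : ℕ) : ℝ) + 2) * ρ) := by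
        intro s hs
        simp only [Finset.mem_range] at hs
        have h : 2 * (k + 1 - s) = 2 * (k - s) + 2 := by omega
        rw [h, Arec (2 * (k - s))]
        push_cast
        ring
      rw [Finset.sum_congr rfl step, Finset.sum_add_distrib, ← Finset.mul_sum]
      simp only [Nat.sub_self, Nat.mul_zero, A0]
      linear_combination ρ ^ 2 * ih + T k hk
  exact S n hn
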